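/- On the Lorentzian cylinder C = ℝ × AddCircle(2π), let c₁, c₂, r₁, r₂ ∈ C and define V₁ = Ĵ⁻(r₁) ∩ Ĵ⁻(r₂) ∩ Ĵ⁺(c₁), V₂ = Ĵ⁻(r₁) ∩ Ĵ⁻(r₂) ∩ Ĵ⁺(c₂), W₁ = Ĵ⁻(r₁) ∩ Ĵ⁺(c₁) ∩ Ĵ⁺(c₂), W₂ = Ĵ⁻(r₂) ∩ Ĵ⁺(c₁) ∩ Ĵ⁺(c₂), and assume V₁, V₂, W₁, W₂ are all nonempty and pairwise disjoint. Let X be a connected component of the causal complement of V₁ ∪ V₂ satisfying X ⊆ Ĵ⁻(r₁) and X ∩ Ĵ⁻(r₂) = ∅. Then frontier Ĵ⁺(X) = frontier Ĵ⁻(r₂). -/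

import Mathlib

/-- The spatial circle `ℝ/2πℤ` of circumference `2π`, with its quotient norm. -/
abbrev Circ : Type := AddCircle (2 * Real.pi)

/-- The causal relation on the Lorentzian cylinder `C = ℝ × Circ`:
`(s, φ) ≼ (t, θ)` iff `‖θ - φ‖ ≤ t - s` (the first coordinate is time). -/
def caus (p q : ℝ × Circ) : Prop := ‖q.2 - p.2‖ ≤ q.1 - p.1

/-- The causal future `Ĵ⁺(p)` of a point of the Lorentzian cylinder. -/
def Jp (p : ℝ × Circ) : Set (ℝ × Circ) := {q | caus p q}

/-- The causal past `Ĵ⁻(p)` of a point of the Lorentzian cylinder. -/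
def Jm (p : ℝ × Circ) : Set (ℝ × Circ) := {q | caus q p}

/-- The causal future `Ĵ⁺(S)` of a set on the Lorentzian cylinder. -/
def JpS (S : Set (ℝ × Circ)) : Set (ℝ × Circ) := {q | ∃ p ∈ S, caus p q}

/-- The causal complement of a set `S` on the Lorentzian cylinder: the set of points
causally disconnected from every point of `S`. -/
def causCompl (S : Set (ℝ × Circ)) : Set (ℝ × Circ) :=
  {q | ∀ p ∈ S, ¬ caus p q ∧ ¬ caus q p}

open Real

lemma circ_norm_le (z : Circ) : ‖z‖ ≤ π := by
  have hp : (2 * π) ≠ 0 := by positivity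
  have := AddCircle.norm_le_half_period (p := 2 * π) hp (x := z)
  rwa [abs_of_pos (by positivity), show (2*π)/2 = π by ring] at this

lemma circ_norm_coe (x : ℝ) (h : |x| ≤ π) : ‖(x : Circ)‖ = |x| := by
  have hp : (2 * π) ≠ 0 := by positivity
  rw [AddCircle.norm_coe_eq_abs_iff (p := 2*π) hp]
  rw [abs_of_pos (show (0:ℝ) < 2*π by positivity)]
  linarith

lemma circ_norm_coe_le (x : ℝ) : ‖(x : Circ)‖ ≤ |x| := by
  rw [AddCircle.norm_eq (p := 2*π)]
  have hp : (0:ℝ) < 2*π := by positivity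
  have h := round_le ((2*π)⁻¹ * x) 0
  rw [Int.cast_zero, sub_zero] at h
  have e1 : x - (round ((2*π)⁻¹*x) : ℝ) * (2*π)
      = (2*π) * ((2*π)⁻¹ * x - (round ((2*π)⁻¹*x) : ℝ)) := by
    field_simp
  calc |x - (round ((2*π)⁻¹*x) : ℝ) * (2*π)|
      = |(2*π) * ((2*π)⁻¹ * x - (round ((2*π)⁻¹*x) : ℝ))| := by rw [e1]
    _ = (2*π) * |(2*π)⁻¹ * x - (round ((2*π)⁻¹*x) : ℝ)| := by rw [abs_mul (2*π), abs_of_pos hp]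
    _ ≤ (2*π) * |(2*π)⁻¹ * x| := by nlinarith
    _ = |(2*π) * ((2*π)⁻¹ * x)| := by rw [abs_mul (2*π), abs_of_pos hp]
    _ = |x| := by congr 1; field_simp

lemma circ_lift (z : Circ) : ∃ x : ℝ, (x : Circ) = z ∧ |x| = ‖z‖ := by
  induction z using QuotientAddGroup.induction_on with
  | H x =>
    refine ⟨x - round ((2*π)⁻¹ * x) * (2*π), ?_, ?_⟩
    · show ((x - round ((2*π)⁻¹ * x) * (2*π) : ℝ) : Circ) = _
      rw [AddCircle.coe_sub]
      have : ((round ((2*π)⁻¹ * x) * (2*π) : ℝ) : Circ) = 0 := by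
        rw [AddCircle.coe_eq_zero_iff]
        exact ⟨round ((2*π)⁻¹ * x), by rw [zsmul_eq_mul]⟩
      rw [this, sub_zero]
    · rw [show ((QuotientAddGroup.mk x : Circ)) = ((x:ℝ) : Circ) from rfl,
        AddCircle.norm_eq (p := 2*π)]

lemma circ_lift' (z : Circ) : ∃ x : ℝ, (x : Circ) = z ∧ |x| = ‖z‖ ∧ |x| ≤ π := by
  obtain ⟨x, h1, h2⟩ := circ_lift z
  exact ⟨x, h1, h2, h2 ▸ circ_norm_le z⟩

lemma circ_norm_sub_pi (z : Circ) : ‖z - ((π : ℝ) : Circ)‖ = π - ‖z‖ := by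
  obtain ⟨x, rfl, habs, hle⟩ := circ_lift' z
  rw [← AddCircle.coe_sub, ← habs]
  rcases le_or_gt 0 x with hx | hx
  · have hx1 : |x| = x := abs_of_nonneg hx
    have h2 : |x - π| = π - x := by
      rw [abs_of_nonpos (by rw [hx1] at hle; linarith)]; ring
    rw [circ_norm_coe _ (by rw [h2, hx1] at *; linarith), h2, hx1]
  · have hx1 : |x| = -x := abs_of_neg hx
    have hco : ((x - π : ℝ) : Circ) = ((x + π : ℝ) : Circ) := by
      rw [show (x + π : ℝ) = (x - π) + 2*π by ring, AddCircle.coe_add_period]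
    have h2 : |x + π| = x + π := abs_of_nonneg (by rw [hx1] at hle; linarith)
    rw [hco, circ_norm_coe _ (by rw [h2]; rw [hx1] at hle; linarith), h2, hx1]; ring

lemma circ_tri (a b c : Circ) : ‖a - c‖ ≤ ‖a - b‖ + ‖b - c‖ := by
  rw [← dist_eq_norm, ← dist_eq_norm, ← dist_eq_norm]; exact dist_triangle a b c

lemma caus_trans {p q r : ℝ × Circ} (h1 : caus p q) (h2 : caus q r) : caus p r := by
  have h1' : ‖q.2 - p.2‖ ≤ q.1 - p.1 := h1
  have h2' : ‖r.2 - q.2‖ ≤ r.1 - q.1 := h2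
  show ‖r.2 - p.2‖ ≤ r.1 - p.1
  calc ‖r.2 - p.2‖ ≤ ‖r.2 - q.2‖ + ‖q.2 - p.2‖ := circ_tri _ _ _
    _ ≤ (r.1 - q.1) + (q.1 - p.1) := add_le_add h2' h1'
    _ = r.1 - p.1 := by ring

lemma caus_refl (p : ℝ × Circ) : caus p p := by
  show ‖p.2 - p.2‖ ≤ p.1 - p.1
  simp

/-- **First boundary light-cone identity of equation (1) of the paper:**
`∂Ĵ⁺(X₁) = ∂Ĵ⁻(r₂)`.  On the Lorentzian cylinder, with the regions
`V₁ = Ĵ⁻(r₁) ∩ Ĵ⁻(r₂) ∩ Ĵ⁺(c₁)`, `V₂ = Ĵ⁻(r₁) ∩ Ĵ⁻(r₂) ∩ Ĵ⁺(c₂)`,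
`W₁ = Ĵ⁻(r₁) ∩ Ĵ⁺(c₁) ∩ Ĵ⁺(c₂)`, `W₂ = Ĵ⁻(r₂) ∩ Ĵ⁺(c₁) ∩ Ĵ⁺(c₂)` all nonempty and
pairwise disjoint, if `X` is a connected component of the causal complement of
`V₁ ∪ V₂` with `X ⊆ Ĵ⁻(r₁)` and `X ∩ Ĵ⁻(r₂) = ∅`, then
`frontier Ĵ⁺(X) = frontier Ĵ⁻(r₂)`. -/
theorem frontier_JpS_X_eq_frontier_Jm_r₂ (c₁ c₂ r₁ r₂ : ℝ × Circ)
    (hV₁ : (Jm r₁ ∩ Jm r₂ ∩ Jp c₁).Nonempty)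
    (hV₂ : (Jm r₁ ∩ Jm r₂ ∩ Jp c₂).Nonempty)
    (hW₁ : (Jm r₁ ∩ Jp c₁ ∩ Jp c₂).Nonempty)
    (hW₂ : (Jm r₂ ∩ Jp c₁ ∩ Jp c₂).Nonempty)
    (hVV : Disjoint (Jm r₁ ∩ Jm r₂ ∩ Jp c₁) (Jm r₁ ∩ Jm r₂ ∩ Jp c₂))
    (hV₁W₁ : Disjoint (Jm r₁ ∩ Jm r₂ ∩ Jp c₁) (Jm r₁ ∩ Jp c₁ ∩ Jp c₂))
    (hV₁W₂ : Disjoint (Jm r₁ ∩ Jm r₂ ∩ Jp c₁) (Jm r₂ ∩ Jp c₁ ∩ Jp c₂))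
    (hV₂W₁ : Disjoint (Jm r₁ ∩ Jm r₂ ∩ Jp c₂) (Jm r₁ ∩ Jp c₁ ∩ Jp c₂))
    (hV₂W₂ : Disjoint (Jm r₁ ∩ Jm r₂ ∩ Jp c₂) (Jm r₂ ∩ Jp c₁ ∩ Jp c₂))
    (hWW : Disjoint (Jm r₁ ∩ Jp c₁ ∩ Jp c₂) (Jm r₂ ∩ Jp c₁ ∩ Jp c₂))
    (X : Set (ℝ × Circ))
    (hXcomp : ∃ q ∈ causCompl ((Jm r₁ ∩ Jm r₂ ∩ Jp c₁) ∪ (Jm r₁ ∩ Jm r₂ ∩ Jp c₂)),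
      X = connectedComponentIn
        (causCompl ((Jm r₁ ∩ Jm r₂ ∩ Jp c₁) ∪ (Jm r₁ ∩ Jm r₂ ∩ Jp c₂))) q)
    (hX₁ : X ⊆ Jm r₁) (hX₂ : X ∩ Jm r₂ = ∅) :
    frontier (JpS X) = frontier (Jm r₂) := by
  obtain ⟨q₀, hq₀Ω, hXeq⟩ := hXcomp
  subst hXeq
  set Ω : Set (ℝ × Circ) :=
    causCompl ((Jm r₁ ∩ Jm r₂ ∩ Jp c₁) ∪ (Jm r₁ ∩ Jm r₂ ∩ Jp c₂)) with hΩdef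
  have pi_pos := Real.pi_pos
  obtain ⟨p₁, hp₁⟩ := hV₁
  obtain ⟨p₂, hp₂⟩ := hV₂
  have hc₁ : c₁ ∈ (Jm r₁ ∩ Jm r₂ ∩ Jp c₁) ∪ (Jm r₁ ∩ Jm r₂ ∩ Jp c₂) :=
    Or.inl ⟨⟨caus_trans hp₁.2 hp₁.1.1, caus_trans hp₁.2 hp₁.1.2⟩, caus_refl c₁⟩
  have hc₂ : c₂ ∈ (Jm r₁ ∩ Jm r₂ ∩ Jp c₁) ∪ (Jm r₁ ∩ Jm r₂ ∩ Jp c₂) :=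
    Or.inr ⟨⟨caus_trans hp₂.2 hp₂.1.1, caus_trans hp₂.2 hp₂.1.2⟩, caus_refl c₂⟩
  have hq₀X : q₀ ∈ connectedComponentIn Ω q₀ := mem_connectedComponentIn hq₀Ω
  have hq₀r₂ : ¬ caus q₀ r₂ := fun h =>
    Set.eq_empty_iff_forall_notMem.mp hX₂ q₀ ⟨hq₀X, h⟩
  have hA₁ : q₀.1 - c₁.1 < ‖q₀.2 - c₁.2‖ := not_le.mp fun h => (hq₀Ω c₁ hc₁).1 h
  have hA₂ : q₀.1 - c₂.1 < ‖q₀.2 - c₂.2‖ := not_le.mp fun h => (hq₀Ω c₂ hc₂).1 h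
  have hB : r₂.1 - q₀.1 < ‖r₂.2 - q₀.2‖ := not_le.mp hq₀r₂
  obtain ⟨y₀, hy₀coe, hy₀abs, hy₀le⟩ := circ_lift' (q₀.2 - r₂.2)
  set e : ℝ := ‖q₀.2 - r₂.2‖ with hedef
  have he_pi : e ≤ π := hy₀abs ▸ hy₀le
  have he0 : 0 ≤ e := norm_nonneg _
  have hBe : ‖r₂.2 - q₀.2‖ = e := norm_sub_rev _ _
  set δ : ℝ := q₀.1 - r₂.1 + e with hδdef
  have hδ : 0 < δ := by rw [hBe] at hB; rw [hδdef]; linarith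
  set σ : ℝ := if 0 ≤ y₀ then 1 else -1 with hσdef
  have hσe : σ * e = y₀ := by
    rw [hσdef, ← hy₀abs]
    split_ifs with h
    · rw [abs_of_nonneg h]; ring
    · rw [abs_of_neg (lt_of_not_ge h)]; ring
  have hσabs : |σ| = 1 := by rw [hσdef]; split_ifs <;> simp
  -- key membership criterion
  have key : ∀ x : ℝ × Circ, r₂.1 - x.1 < ‖x.2 - r₂.2‖ → ‖q₀.2 - x.2‖ ≤ q₀.1 - x.1 →
      x ∈ Ω := by
    intro x h1 h2
    rw [hΩdef]
    simp only [causCompl, Set.mem_setOf_eq]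
    intro p hp
    have hpr₂ : caus p r₂ := by
      rcases hp with h | h
      · exact h.1.2
      · exact h.1.2
    constructor
    · intro hpx
      rcases hp with h | h
      · have hcx : ‖x.2 - c₁.2‖ ≤ x.1 - c₁.1 := caus_trans h.2 hpx
        have tri : ‖q₀.2 - c₁.2‖ ≤ ‖q₀.2 - x.2‖ + ‖x.2 - c₁.2‖ := circ_tri _ _ _
        linarith
      · have hcx : ‖x.2 - c₂.2‖ ≤ x.1 - c₂.1 := caus_trans h.2 hpx
        have tri : ‖q₀.2 - c₂.2‖ ≤ ‖q₀.2 - x.2‖ + ‖x.2 - c₂.2‖ := circ_tri _ _ _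
        linarith
    · intro hxp
      have hxr : ‖r₂.2 - x.2‖ ≤ r₂.1 - x.1 := caus_trans hxp hpr₂
      have hrev : ‖x.2 - r₂.2‖ = ‖r₂.2 - x.2‖ := norm_sub_rev _ _
      linarith
  -- the connecting set
  set f : ℝ → ℝ × Circ := fun u => (r₂.1 - u + δ, r₂.2 + ((σ*u : ℝ) : Circ)) with hfdef
  set gseg : ℝ → ℝ × Circ := fun t => (t, r₂.2 + ((π : ℝ) : Circ)) with hgdef
  set S : Set (ℝ × Circ) :=
    f '' Set.Icc e π ∪ gseg '' Set.Ioc (r₂.1 - π) (r₂.1 - π + δ) with hSdef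
  have hSΩ : S ⊆ Ω := by
    rintro x (⟨u, hu, rfl⟩ | ⟨t, ht, rfl⟩)
    · have hu0 : (0:ℝ) ≤ u := le_trans he0 hu.1
      have habsu : |σ * u| = u := by
        rw [abs_mul, hσabs, one_mul, abs_of_nonneg hu0]
      apply key
      · show r₂.1 - (r₂.1 - u + δ) < ‖(r₂.2 + ((σ*u : ℝ) : Circ)) - r₂.2‖
        rw [add_sub_cancel_left, circ_norm_coe _ (by rw [habsu]; exact hu.2), habsu]
        linarith
      · show ‖q₀.2 - (r₂.2 + ((σ*u : ℝ) : Circ))‖ ≤ q₀.1 - (r₂.1 - u + δ)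
        have hd : q₀.2 - (r₂.2 + ((σ*u : ℝ) : Circ)) = ((y₀ - σ*u : ℝ) : Circ) := by
          rw [sub_add_eq_sub_sub, ← hy₀coe, ← AddCircle.coe_sub]
        rw [hd]
        calc ‖((y₀ - σ*u : ℝ) : Circ)‖ ≤ |y₀ - σ*u| := circ_norm_coe_le _
          _ = u - e := by
            rw [← hσe, show σ*e - σ*u = σ*(e-u) from by ring, abs_mul, hσabs, one_mul,
              abs_of_nonpos (by linarith [hu.1])]
            ring
          _ ≤ q₀.1 - (r₂.1 - u + δ) := by rw [hδdef]; ring_nf; linarith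
    · apply key
      · show r₂.1 - t < ‖(r₂.2 + ((π : ℝ) : Circ)) - r₂.2‖
        rw [add_sub_cancel_left,
          circ_norm_coe _ (le_of_eq (abs_of_nonneg pi_pos.le)), abs_of_nonneg pi_pos.le]
        linarith [ht.1]
      · show ‖q₀.2 - (r₂.2 + ((π : ℝ) : Circ))‖ ≤ q₀.1 - t
        rw [sub_add_eq_sub_sub, circ_norm_sub_pi]
        have h2 := ht.2
        rw [hδdef] at h2
        rw [← hedef]
        linarith
  have hq₀S : q₀ ∈ S := by
    left
    refine ⟨e, ⟨le_refl e, he_pi⟩, ?_⟩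
    have h1 : r₂.1 - e + δ = q₀.1 := by rw [hδdef]; ring
    have h2 : r₂.2 + ((σ*e : ℝ) : Circ) = q₀.2 := by rw [hσe, hy₀coe]; abel
    rw [hfdef]
    exact Prod.ext_iff.mpr ⟨h1, h2⟩
  have hcont1 : Continuous f := by
    rw [hfdef]
    refine Continuous.prodMk (by fun_prop) ?_
    exact continuous_const.add
      ((AddCircle.continuous_mk' (2*π)).comp (continuous_const.mul continuous_id))
  have hcont2 : Continuous gseg := by
    rw [hgdef]; exact Continuous.prodMk continuous_id continuous_const
  have hpre1 : IsPreconnected (f '' Set.Icc e π) :=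
    isPreconnected_Icc.image f hcont1.continuousOn
  have hpre2 : IsPreconnected (gseg '' Set.Ioc (r₂.1 - π) (r₂.1 - π + δ)) :=
    isPreconnected_Ioc.image gseg hcont2.continuousOn
  have hneg : ((-π : ℝ) : Circ) = ((π : ℝ) : Circ) := by
    have h := AddCircle.coe_add_period (2*π) (-π)
    rw [show -π + 2*π = π from by ring] at h
    exact h.symm
  have hw1 : (r₂.1 - π + δ, r₂.2 + ((π : ℝ) : Circ)) ∈ f '' Set.Icc e π := by
    refine ⟨π, ⟨he_pi, le_refl π⟩, ?_⟩
    rw [hfdef]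
    refine Prod.ext_iff.mpr ⟨rfl, ?_⟩
    show r₂.2 + ((σ*π : ℝ) : Circ) = r₂.2 + ((π : ℝ) : Circ)
    congr 1
    rw [hσdef]
    split_ifs
    · norm_num
    · rw [show ((-1:ℝ))*π = -π from by ring, hneg]
  have hw2 : (r₂.1 - π + δ, r₂.2 + ((π : ℝ) : Circ))
      ∈ gseg '' Set.Ioc (r₂.1 - π) (r₂.1 - π + δ) := by
    refine ⟨r₂.1 - π + δ, ⟨by linarith, le_refl _⟩, ?_⟩
    rw [hgdef]
  have hpreS : IsPreconnected S :=
    IsPreconnected.union _ hw1 hw2 hpre1 hpre2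
  have hSX : S ⊆ connectedComponentIn Ω q₀ :=
    hpreS.subset_connectedComponentIn hq₀S hSΩ
  have hmain : JpS (connectedComponentIn Ω q₀) = (Jm r₂)ᶜ := by
    apply Set.Subset.antisymm
    · rintro q ⟨x, hxX, hxq⟩ hq
      have hq' : caus q r₂ := hq
      exact Set.eq_empty_iff_forall_notMem.mp hX₂ x ⟨hxX, caus_trans hxq hq'⟩
    · intro q hq
      have hq' : ¬ caus q r₂ := hq
      have hq2 : r₂.1 - q.1 < ‖r₂.2 - q.2‖ := not_le.mp hq'
      set ε : ℝ := min δ (‖r₂.2 - q.2‖ - (r₂.1 - q.1)) with hεdef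
      have hε : 0 < ε := lt_min hδ (by linarith)
      have hε2 : ε ≤ ‖r₂.2 - q.2‖ - (r₂.1 - q.1) := min_le_right _ _
      refine ⟨(r₂.1 - π + ε, r₂.2 + ((π : ℝ) : Circ)), hSX (Or.inr ⟨r₂.1 - π + ε,
        ⟨by linarith, add_le_add_right (min_le_left _ _) _⟩, by rw [hgdef]⟩), ?_⟩
      show ‖q.2 - (r₂.2 + ((π : ℝ) : Circ))‖ ≤ q.1 - (r₂.1 - π + ε)
      rw [sub_add_eq_sub_sub, circ_norm_sub_pi]
      have h3 : ‖q.2 - r₂.2‖ = ‖r₂.2 - q.2‖ := norm_sub_rev _ _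
      linarith
  rw [hmain, frontier_compl]
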